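/- Let k be a division ring and f : k^n → k^n an injective map such that the image of every left or right affine subspace is a left or right affine subspace. Then f is bijective and for every left or right affine subspace A, the dimension of f(A) equals the dimension of A. -/

import Mathlib

open Function Set

variable {k : Type*}

/-- A set is a left `k`-subspace of `k^n`. -/
def IsLeftSub [DivisionRing k] {n : ℕ} (A : Set (Fin n → k)) : Prop :=
  ∃ S : Submodule k (Fin n → k), A = (S : Set (Fin n → k))

/-- A set is a right `k`-subspace of `k^n` (right modules encoded via `kᵐᵒᵖ`). -/
def IsRightSub [DivisionRing k] {n : ℕ} (A : Set (Fin n → k)) : Prop :=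
  ∃ S : Submodule kᵐᵒᵖ (Fin n → k), A = (S : Set (Fin n → k))

/-- A set is a left affine subspace of `k^n`: a translate of a left subspace. -/
def IsLeftAff [DivisionRing k] {n : ℕ} (A : Set (Fin n → k)) : Prop :=
  ∃ (v : Fin n → k) (S : Submodule k (Fin n → k)), A = (v + ·) '' (S : Set (Fin n → k))

/-- A set is a right affine subspace of `k^n`: a translate of a right subspace. -/
def IsRightAff [DivisionRing k] {n : ℕ} (A : Set (Fin n → k)) : Prop :=
  ∃ (v : Fin n → k) (S : Submodule kᵐᵒᵖ (Fin n → k)), A = (v + ·) '' (S : Set (Fin n → k))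

/-- `A` is a left affine subspace of dimension `d`. -/
def HasDimL [DivisionRing k] {n : ℕ} (A : Set (Fin n → k)) (d : ℕ) : Prop :=
  ∃ (v : Fin n → k) (S : Submodule k (Fin n → k)),
    A = (v + ·) '' (S : Set (Fin n → k)) ∧ Module.finrank k S = d

/-- `A` is a right affine subspace of dimension `d`. -/
def HasDimR [DivisionRing k] {n : ℕ} (A : Set (Fin n → k)) (d : ℕ) : Prop :=
  ∃ (v : Fin n → k) (S : Submodule kᵐᵒᵖ (Fin n → k)),
    A = (v + ·) '' (S : Set (Fin n → k)) ∧ Module.finrank kᵐᵒᵖ S = d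



section AuxGeneric
open Module
variable {R V W : Type*} [DivisionRing R] [AddCommGroup V] [Module R V]
  [AddCommGroup W] [Module R W]


lemma aux_finrank_map_of_injOn [FiniteDimensional R V] (f : V →ₗ[R] W) (p : Submodule R V)
    (h : Set.InjOn f p) : finrank R (p.map f) = finrank R p := by
  have hfun : ∀ x : p, f x ∈ p.map f := fun x => ⟨x, x.2, rfl⟩
  let g : p →ₗ[R] p.map f := (f.domRestrict p).codRestrict _ hfun
  have hbij : Function.Bijective g := by
    constructor
    · intro x y hxy
      exact Subtype.ext (h x.2 y.2 (congrArg Subtype.val hxy))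
    · rintro ⟨_, x, hx, rfl⟩; exact ⟨⟨x, hx⟩, rfl⟩
  exact ((LinearEquiv.ofBijective g hbij).finrank_eq).symm

lemma aux_exists_functional [FiniteDimensional R V] (T : Submodule R V) (h : T ≠ ⊤) :
    ∃ φ : V →ₗ[R] R, φ ≠ 0 ∧ ∀ x ∈ T, φ x = 0 := by
  obtain ⟨C, hC⟩ := T.exists_isCompl
  have hCbot : C ≠ ⊥ := by
    rintro rfl
    exact h (by simpa using hC.symm.codisjoint.eq_top)
  haveI : Nontrivial C := Submodule.nontrivial_iff_ne_bot.mpr hCbot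
  let b := Basis.ofVectorSpace R C
  obtain ⟨i⟩ := b.index_nonempty
  let proj := Submodule.projectionOnto C T hC.symm
  refine ⟨(b.coord i).comp proj, ?_, ?_⟩
  · intro h0
    have h1 : (b.coord i) (proj ((b i : C) : V)) = 1 := by
      rw [Submodule.projectionOnto_apply_left hC.symm (b i)]
      simp
    rw [show (b.coord i) (proj ((b i : C) : V)) = ((b.coord i).comp proj) ((b i : C) : V) from rfl,
      h0] at h1
    simp at h1
  · intro x hx
    simp [proj, Submodule.projectionOnto_apply_of_mem_right hC.symm hx]

lemma aux_up [FiniteDimensional R V] (S : Submodule R V) (h : finrank R S < finrank R V) :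
    ∃ S' : Submodule R V, S < S' ∧ finrank R S' = finrank R S + 1 := by
  have hS : S ≠ ⊤ := by rintro rfl; simp [finrank_top] at h
  obtain ⟨x, hx⟩ : ∃ x, x ∉ S := by
    by_contra h'; push_neg at h'; exact hS (eq_top_iff.2 fun y _ => h' y)
  have hx0 : x ≠ 0 := fun h0 => hx (h0 ▸ S.zero_mem)
  have hxmem : x ∈ S ⊔ R ∙ x := Submodule.mem_sup_right (Submodule.mem_span_singleton_self x)
  refine ⟨S ⊔ R ∙ x, lt_of_le_of_ne le_sup_left (fun he => hx (he ▸ hxmem)), ?_⟩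
  have hinf : S ⊓ (R ∙ x) = ⊥ := by
    rw [eq_bot_iff]
    rintro y ⟨hyS, hyx⟩
    obtain ⟨c, rfl⟩ := Submodule.mem_span_singleton.mp hyx
    rcases eq_or_ne c 0 with rfl | hc
    · simp
    · exact absurd (by simpa [inv_smul_smul₀ hc] using S.smul_mem c⁻¹ hyS : x ∈ S) hx
  have := Submodule.finrank_sup_add_finrank_inf_eq S (R ∙ x)
  rw [hinf, finrank_bot, finrank_span_singleton hx0] at this
  omega

lemma aux_down [FiniteDimensional R V] (S : Submodule R V) (h : finrank R S ≠ 0) :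
    ∃ S' : Submodule R V, S' < S ∧ finrank R S' + 1 = finrank R S := by
  have hSbot : S ≠ ⊥ := by rintro rfl; simp at h
  haveI : Nontrivial S := Submodule.nontrivial_iff_ne_bot.mpr hSbot
  obtain ⟨x, hx0⟩ := exists_ne (0 : S)
  obtain ⟨C, hC⟩ := (R ∙ x : Submodule R S).exists_isCompl
  refine ⟨C.map S.subtype, ?_, ?_⟩
  · refine lt_of_le_of_ne (Submodule.map_subtype_le S C) (fun he => ?_)
    have hxS' : (x : V) ∈ C.map S.subtype := he.symm ▸ x.2
    obtain ⟨c, hc, hcx⟩ := hxS'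
    have : c = x := Subtype.ext hcx
    subst this
    have : c ∈ (R ∙ c : Submodule R S) ⊓ C := ⟨Submodule.mem_span_singleton_self c, hc⟩
    rw [hC.inf_eq_bot] at this
    exact hx0 this
  · have h1 : finrank R (C.map S.subtype) = finrank R C :=
      aux_finrank_map_of_injOn S.subtype C (Subtype.val_injective.injOn)
    have h2 := Submodule.finrank_add_eq_of_isCompl hC
    rw [finrank_span_singleton hx0] at h2
    rw [h1, ← h2]
    omega

lemma aux_chainDown [FiniteDimensional R V] :
    ∀ (d : ℕ) (S : Submodule R V), finrank R S = d →
    ∃ c : ℕ → Submodule R V, c d = S ∧ (∀ i ≤ d, finrank R (c i) = i) ∧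
      ∀ i, i + 1 ≤ d → c i < c (i + 1) := by
  intro d
  induction d with
  | zero =>
    intro S hS
    refine ⟨fun _ => S, rfl, fun i hi => ?_, fun i hi => by omega⟩
    have : i = 0 := by omega
    subst this; simpa using hS
  | succ d ih =>
    intro S hS
    obtain ⟨S', hS'lt, hS'rk⟩ := aux_down S (by omega)
    obtain ⟨c', hc'd, hc'rk, hc'lt⟩ := ih S' (by omega)
    refine ⟨fun i => if i ≤ d then c' i else S, by simp, ?_, ?_⟩
    · intro i hi
      by_cases h' : i ≤ d
      · beta_reduce
        rw [if_pos h']; exact hc'rk i h'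
      · have hie : i = d + 1 := by omega
        beta_reduce
        rw [if_neg h', hS, hie]
    · intro i hi
      by_cases h' : i + 1 ≤ d
      · beta_reduce
        rw [if_pos (show i ≤ d by omega), if_pos h']; exact hc'lt i h'
      · have hie : i = d := by omega
        subst hie
        beta_reduce
        rw [if_pos (le_refl i), if_neg (by omega), hc'd]
        exact hS'lt

lemma aux_chainUp [FiniteDimensional R V] :
    ∀ (m : ℕ) (S : Submodule R V), finrank R S + m = finrank R V →
    ∃ c : ℕ → Submodule R V, c 0 = S ∧ (∀ i ≤ m, finrank R (c i) = finrank R S + i) ∧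
      ∀ i, i + 1 ≤ m → c i < c (i + 1) := by
  intro m
  induction m with
  | zero =>
    intro S hS
    refine ⟨fun _ => S, rfl, fun i hi => ?_, fun i hi => by omega⟩
    have : i = 0 := by omega
    subst this; simp
  | succ m ih =>
    intro S hS
    obtain ⟨S', hS'lt, hS'rk⟩ := aux_up S (by omega)
    obtain ⟨c', hc'0, hc'rk, hc'lt⟩ := ih S' (by omega)
    refine ⟨fun i => Nat.rec S (fun j _ => c' j) i, rfl, ?_, ?_⟩
    · intro i hi
      cases i with
      | zero => simp
      | succ j =>
        have := hc'rk j (by omega)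
        show finrank R (c' j) = finrank R S + (j + 1)
        omega
    · intro i hi
      cases i with
      | zero =>
        show S < c' 0
        rw [hc'0]; exact hS'lt
      | succ j =>
        show c' j < c' (j + 1)
        exact hc'lt j (by omega)

lemma aux_chain [FiniteDimensional R V] (S : Submodule R V) :
    ∃ c : ℕ → Submodule R V, c (finrank R S) = S ∧
      (∀ i ≤ finrank R V, finrank R (c i) = i) ∧
      ∀ i, i + 1 ≤ finrank R V → c i < c (i + 1) := by
  set d := finrank R S with hd
  set n := finrank R V with hn
  have hdn : d ≤ n := Submodule.finrank_le S
  obtain ⟨cD, hcDd, hcDrk, hcDlt⟩ := aux_chainDown d S rfl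
  obtain ⟨cU, hcU0, hcUrk, hcUlt⟩ := aux_chainUp (n - d) S (by omega)
  refine ⟨fun i => if i ≤ d then cD i else cU (i - d), by simp [hcDd], ?_, ?_⟩
  · intro i hi
    by_cases h' : i ≤ d
    · beta_reduce
      rw [if_pos h']; exact hcDrk i h'
    · beta_reduce
      rw [if_neg h']
      have := hcUrk (i - d) (by omega)
      rw [this, ← hd]
      omega
  · intro i hi
    by_cases h' : i + 1 ≤ d
    · beta_reduce
      rw [if_pos (show i ≤ d by omega), if_pos h']; exact hcDlt i h'
    · by_cases h'' : i ≤ d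
      · have hid : i = d := by omega
        beta_reduce
        rw [if_pos (by omega : i ≤ d), if_neg (by omega : ¬ i + 1 ≤ d), hid, hcDd,
          show d + 1 - d = 1 from by omega]
        have := hcUlt 0 (by omega)
        rwa [hcU0] at this
      · beta_reduce
        rw [if_neg h'', if_neg (by omega : ¬ (i + 1 ≤ d)),
          show i + 1 - d = (i - d) + 1 from by omega]
        exact hcUlt (i - d) (by omega)

end AuxGeneric

section AuxOp
open Module
variable [DivisionRing k]

def opE (k : Type*) [DivisionRing k] : k ≃ₗ[kᵐᵒᵖ] kᵐᵒᵖ where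
  toFun := MulOpposite.op
  invFun := MulOpposite.unop
  map_add' := by intros; rfl
  map_smul' := by intro a b; rfl
  left_inv := fun _ => rfl
  right_inv := fun _ => rfl

instance : Module.Finite kᵐᵒᵖ k := Module.Finite.equiv (opE k).symm

lemma finrank_op_self : finrank kᵐᵒᵖ k = 1 := by
  rw [(opE k).finrank_eq, finrank_self]

lemma finrank_op_pi (n : ℕ) : finrank kᵐᵒᵖ (Fin n → k) = n := by
  rw [Module.finrank_pi_fintype kᵐᵒᵖ]
  simp [finrank_op_self]

lemma finrank_k_pi (n : ℕ) : finrank k (Fin n → k) = n := by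
  rw [Module.finrank_pi]; simp

lemma single_eq_op_smul (n : ℕ) (i : Fin n) (a : k) :
    Pi.single i a = MulOpposite.op a • (Pi.single i 1 : Fin n → k) := by
  ext j
  rcases eq_or_ne j i with rfl | h
  · simp
  · simp [Pi.single_eq_of_ne h]

lemma single_eq_smul (n : ℕ) (i : Fin n) (a : k) :
    Pi.single i a = a • (Pi.single i 1 : Fin n → k) := by
  ext j
  rcases eq_or_ne j i with rfl | h
  · simp
  · simp [Pi.single_eq_of_ne h]

lemma expandR (n : ℕ) (φ : (Fin n → k) →ₗ[kᵐᵒᵖ] kᵐᵒᵖ) (x : Fin n → k) :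
    φ x = ∑ i, MulOpposite.op (x i) * φ (Pi.single i 1) := by
  conv_lhs => rw [← Finset.univ_sum_single x]
  rw [map_sum]
  congr 1
  ext i
  rw [single_eq_op_smul, map_smul]
  rfl

lemma expandL (n : ℕ) (φ : (Fin n → k) →ₗ[k] k) (x : Fin n → k) :
    φ x = ∑ i, x i * φ (Pi.single i 1) := by
  conv_lhs => rw [← Finset.univ_sum_single x]
  rw [map_sum]
  congr 1
  ext i
  rw [single_eq_smul, map_smul]
  rfl

lemma coreLR : ∀ (n : ℕ) (B : Submodule k (Fin n → k)) (T : Submodule kᵐᵒᵖ (Fin n → k)),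
    (B : Set (Fin n → k)) ⊆ (T : Set (Fin n → k)) →
    finrank k B ≤ finrank kᵐᵒᵖ T ∧
      ((B : Set (Fin n → k)) = (T : Set (Fin n → k)) ∨ finrank k B < finrank kᵐᵒᵖ T) := by
  intro n
  induction n with
  | zero =>
    intro B T hBT
    have hB : (B : Set (Fin 0 → k)) = (T : Set _) := by
      apply Set.eq_of_subset_of_subset hBT
      intro x hx
      have hx0 : x = 0 := Subsingleton.elim x 0
      rw [SetLike.mem_coe, hx0]; exact B.zero_mem
    have h1 : finrank k B ≤ 0 := by
      have := Submodule.finrank_le B; rwa [finrank_k_pi] at this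
    exact ⟨by omega, Or.inl hB⟩
  | succ m ih =>
    intro B T hBT
    by_cases hT : T = ⊤
    · subst hT
      have hle : finrank k B ≤ m + 1 := by
        have := Submodule.finrank_le B; rwa [finrank_k_pi] at this
      have htop : finrank kᵐᵒᵖ (⊤ : Submodule kᵐᵒᵖ (Fin (m+1) → k)) = m + 1 := by
        rw [finrank_top, finrank_op_pi]
      rw [htop]
      refine ⟨hle, ?_⟩
      rcases eq_or_lt_of_le hle with heq | hlt
      · left
        have hBtop : B = ⊤ := Submodule.eq_top_of_finrank_eq (by rw [heq, finrank_k_pi])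
        rw [hBtop]; simp
      · right; omega
    · obtain ⟨φ, hφ0, hφ⟩ := aux_exists_functional T hT
      obtain ⟨j, hj⟩ : ∃ j, φ (Pi.single j 1) ≠ 0 := by
        by_contra h'
        push_neg at h'
        apply hφ0
        apply LinearMap.ext
        intro x
        rw [expandR, Finset.sum_eq_zero (fun i _ => by rw [h' i, mul_zero])]
        rfl
      have hkey : ∀ x ∈ T, ∀ y ∈ T,
          (∀ i', x (j.succAbove i') = y (j.succAbove i')) → x = y := by
        intro x hx y hy hxy
        have hz : ∀ i, i ≠ j → (x - y) i = 0 := by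
          intro i hij
          obtain ⟨i', rfl⟩ := Fin.exists_succAbove_eq hij
          simp [hxy i']
        have h0 : φ (x - y) = 0 := hφ _ (T.sub_mem hx hy)
        rw [expandR, Finset.sum_eq_single j
          (fun b _ hb => by rw [hz b hb, MulOpposite.op_zero, zero_mul])
          (fun h => absurd (Finset.mem_univ j) h)] at h0
        have hzj : (x - y) j = 0 := by
          have h2 := (mul_eq_zero.mp h0).resolve_right hj
          exact (MulOpposite.op_eq_zero_iff _).mp h2
        have : x - y = 0 := by
          ext i
          rcases eq_or_ne i j with rfl | h
          · simpa using hzj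
          · simpa using hz i h
        exact sub_eq_zero.mp this
      set π := LinearMap.funLeft k k j.succAbove with hπdef
      set π' := LinearMap.funLeft kᵐᵒᵖ k j.succAbove with hπ'def
      have hinjT : Set.InjOn π' (T : Set _) := by
        intro x hx y hy hxy
        exact hkey x hx y hy (fun i' => congrFun hxy i')
      have hinjB : Set.InjOn π (B : Set _) := fun x hx y hy hxy =>
        hkey x (hBT hx) y (hBT hy) (fun i' => congrFun hxy i')
      have hsub : (↑(B.map π) : Set (Fin m → k)) ⊆ (↑(T.map π') : Set (Fin m → k)) := by
        rintro z hz
        rw [SetLike.mem_coe, Submodule.mem_map] at hz ⊢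
        obtain ⟨x, hx, rfl⟩ := hz
        exact ⟨x, hBT hx, rfl⟩
      obtain ⟨h1, h2⟩ := ih (B.map π) (T.map π') hsub
      have e1 : finrank k (B.map π) = finrank k B := aux_finrank_map_of_injOn π B hinjB
      have e2 : finrank kᵐᵒᵖ (T.map π') = finrank kᵐᵒᵖ T := aux_finrank_map_of_injOn π' T hinjT
      rw [e1, e2] at h1 h2
      refine ⟨h1, ?_⟩
      rcases h2 with hset | hlt
      · left
        apply Set.eq_of_subset_of_subset hBT
        intro t ht
        have hmem : π' t ∈ (T.map π' : Submodule kᵐᵒᵖ (Fin m → k)) :=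
          Submodule.mem_map.mpr ⟨t, ht, rfl⟩
        rw [← SetLike.mem_coe, ← hset, SetLike.mem_coe, Submodule.mem_map] at hmem
        obtain ⟨b, hb, hbt⟩ := hmem
        have hbt' : b = t := hkey b (hBT hb) t ht (fun i' => congrFun hbt i')
        rw [← hbt']; exact hb
      · right; exact hlt

lemma coreRL : ∀ (n : ℕ) (B : Submodule kᵐᵒᵖ (Fin n → k)) (T : Submodule k (Fin n → k)),
    (B : Set (Fin n → k)) ⊆ (T : Set (Fin n → k)) →
    finrank kᵐᵒᵖ B ≤ finrank k T ∧
      ((B : Set (Fin n → k)) = (T : Set (Fin n → k)) ∨ finrank kᵐᵒᵖ B < finrank k T) := by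
  intro n
  induction n with
  | zero =>
    intro B T hBT
    have hB : (B : Set (Fin 0 → k)) = (T : Set _) := by
      apply Set.eq_of_subset_of_subset hBT
      intro x hx
      have hx0 : x = 0 := Subsingleton.elim x 0
      rw [SetLike.mem_coe, hx0]; exact B.zero_mem
    have h1 : finrank kᵐᵒᵖ B ≤ 0 := by
      have := Submodule.finrank_le B; rwa [finrank_op_pi] at this
    exact ⟨by omega, Or.inl hB⟩
  | succ m ih =>
    intro B T hBT
    by_cases hT : T = ⊤
    · subst hT
      have hle : finrank kᵐᵒᵖ B ≤ m + 1 := by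
        have := Submodule.finrank_le B; rwa [finrank_op_pi] at this
      have htop : finrank k (⊤ : Submodule k (Fin (m+1) → k)) = m + 1 := by
        rw [finrank_top, finrank_k_pi]
      rw [htop]
      refine ⟨hle, ?_⟩
      rcases eq_or_lt_of_le hle with heq | hlt
      · left
        have hBtop : B = ⊤ := Submodule.eq_top_of_finrank_eq (by rw [heq, finrank_op_pi])
        rw [hBtop]; simp
      · right; omega
    · obtain ⟨φ, hφ0, hφ⟩ := aux_exists_functional T hT
      obtain ⟨j, hj⟩ : ∃ j, φ (Pi.single j 1) ≠ 0 := by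
        by_contra h'
        push_neg at h'
        apply hφ0
        apply LinearMap.ext
        intro x
        rw [expandL, Finset.sum_eq_zero (fun i _ => by rw [h' i, mul_zero])]
        rfl
      have hkey : ∀ x ∈ T, ∀ y ∈ T,
          (∀ i', x (j.succAbove i') = y (j.succAbove i')) → x = y := by
        intro x hx y hy hxy
        have hz : ∀ i, i ≠ j → (x - y) i = 0 := by
          intro i hij
          obtain ⟨i', rfl⟩ := Fin.exists_succAbove_eq hij
          simp [hxy i']
        have h0 : φ (x - y) = 0 := hφ _ (T.sub_mem hx hy)
        rw [expandL, Finset.sum_eq_single j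
          (fun b _ hb => by rw [hz b hb, zero_mul])
          (fun h => absurd (Finset.mem_univ j) h)] at h0
        have hzj : (x - y) j = 0 := (mul_eq_zero.mp h0).resolve_right hj
        have : x - y = 0 := by
          ext i
          rcases eq_or_ne i j with rfl | h
          · simpa using hzj
          · simpa using hz i h
        exact sub_eq_zero.mp this
      set π := LinearMap.funLeft kᵐᵒᵖ k j.succAbove with hπdef
      set π' := LinearMap.funLeft k k j.succAbove with hπ'def
      have hinjT : Set.InjOn π' (T : Set _) := by
        intro x hx y hy hxy
        exact hkey x hx y hy (fun i' => congrFun hxy i')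
      have hinjB : Set.InjOn π (B : Set _) := fun x hx y hy hxy =>
        hkey x (hBT hx) y (hBT hy) (fun i' => congrFun hxy i')
      have hsub : (↑(B.map π) : Set (Fin m → k)) ⊆ (↑(T.map π') : Set (Fin m → k)) := by
        rintro z hz
        rw [SetLike.mem_coe, Submodule.mem_map] at hz ⊢
        obtain ⟨x, hx, rfl⟩ := hz
        exact ⟨x, hBT hx, rfl⟩
      obtain ⟨h1, h2⟩ := ih (B.map π) (T.map π') hsub
      have e1 : finrank kᵐᵒᵖ (B.map π) = finrank kᵐᵒᵖ B := aux_finrank_map_of_injOn π B hinjB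
      have e2 : finrank k (T.map π') = finrank k T := aux_finrank_map_of_injOn π' T hinjT
      rw [e1, e2] at h1 h2
      refine ⟨h1, ?_⟩
      rcases h2 with hset | hlt
      · left
        apply Set.eq_of_subset_of_subset hBT
        intro t ht
        have hmem : π' t ∈ (T.map π' : Submodule k (Fin m → k)) :=
          Submodule.mem_map.mpr ⟨t, ht, rfl⟩
        rw [← SetLike.mem_coe, ← hset, SetLike.mem_coe, Submodule.mem_map] at hmem
        obtain ⟨b, hb, hbt⟩ := hmem
        have hbt' : b = t := hkey b (hBT hb) t ht (fun i' => congrFun hbt i')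
        rw [← hbt']; exact hb
      · right; exact hlt


lemma mem_transl {n : ℕ} (v : Fin n → k) (s : Set (Fin n → k)) (x : Fin n → k) :
    x ∈ (v + ·) '' s ↔ x - v ∈ s := by
  constructor
  · rintro ⟨y, hy, rfl⟩; simpa using hy
  · intro h; exact ⟨x - v, h, by simp⟩

lemma transl_zero {n : ℕ} (s : Set (Fin n → k)) : ((0 : Fin n → k) + ·) '' s = s := by
  have h : ((0 : Fin n → k) + ·) = id := funext fun x => zero_add x
  rw [h, Set.image_id]

lemma transl_sub {n : ℕ} {a b : Fin n → k} {S T : Set (Fin n → k)}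
    (hS0 : (0 : Fin n → k) ∈ S)
    (hTsub : ∀ x ∈ T, ∀ y ∈ T, x - y ∈ T)
    (h : (a + ·) '' S ⊆ (b + ·) '' T) : S ⊆ T := by
  have ha : a ∈ (a + ·) '' S := ⟨0, hS0, by simp⟩
  have hab : a - b ∈ T := by
    have := h ha
    rwa [mem_transl] at this
  intro x hx
  have hax : a + x ∈ (a + ·) '' S := ⟨x, hx, rfl⟩
  have hx' : (a + x) - b ∈ T := by
    have := h hax
    rwa [mem_transl] at this
  have he : ((a + x) - b) - (a - b) = x := by abel
  rw [← he]; exact hTsub _ hx' _ hab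

lemma transl_eq {n : ℕ} {a b : Fin n → k} {T : Set (Fin n → k)}
    (hT0 : (0 : Fin n → k) ∈ T)
    (hTsub : ∀ x ∈ T, ∀ y ∈ T, x - y ∈ T)
    (h : (a + ·) '' T ⊆ (b + ·) '' T) : (a + ·) '' T = (b + ·) '' T := by
  have ha : a ∈ (a + ·) '' T := ⟨0, hT0, by simp⟩
  have hab : a - b ∈ T := by
    have := h ha
    rwa [mem_transl] at this
  have hadd : ∀ x ∈ T, ∀ y ∈ T, x + y ∈ T := by
    intro x hx y hy
    have h0y : 0 - y ∈ T := hTsub 0 hT0 y hy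
    have := hTsub x hx _ h0y
    have he : x - (0 - y) = x + y := by abel
    rwa [he] at this
  ext x
  rw [mem_transl, mem_transl]
  constructor
  · intro hxa
    have he : (x - a) + (a - b) = x - b := by abel
    rw [← he]; exact hadd _ hxa _ hab
  · intro hxb
    have he : (x - b) - (a - b) = x - a := by abel
    rw [← he]; exact hTsub _ hxb _ hab

lemma affd_mono {n : ℕ} {A B : Set (Fin n → k)} {d e : ℕ}
    (hA : HasDimL A d ∨ HasDimR A d) (hB : HasDimL B e ∨ HasDimR B e) (hAB : A ⊆ B) :
    d ≤ e ∧ (A = B ∨ d < e) := by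
  rcases hA with ⟨a, S, hAeq, hdS⟩ | ⟨a, S, hAeq, hdS⟩ <;>
    rcases hB with ⟨b, T, hBeq, hdT⟩ | ⟨b, T, hBeq, hdT⟩ <;>
      subst hAeq <;> subst hBeq <;> subst hdS <;> subst hdT <;>
        have hST : (S : Set (Fin n → k)) ⊆ (T : Set (Fin n → k)) :=
          transl_sub S.zero_mem (fun x hx y hy => T.sub_mem hx hy) hAB
  · -- L L
    have hle : S ≤ T := hST
    refine ⟨Submodule.finrank_mono hle, ?_⟩
    by_cases hST' : S = T
    · subst hST'
      exact Or.inl (transl_eq S.zero_mem (fun x hx y hy => S.sub_mem hx hy) hAB)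
    · exact Or.inr (Submodule.finrank_lt_finrank_of_lt (lt_of_le_of_ne hle hST'))
  · -- L R
    obtain ⟨h1, h2⟩ := coreLR n S T hST
    refine ⟨h1, ?_⟩
    rcases h2 with hset | hlt
    · left
      have : (a + ·) '' (S : Set (Fin n → k)) = (a + ·) '' (T : Set (Fin n → k)) := by rw [hset]
      rw [this] at hAB ⊢
      exact transl_eq T.zero_mem (fun x hx y hy => T.sub_mem hx hy) hAB
    · exact Or.inr hlt
  · -- R L
    obtain ⟨h1, h2⟩ := coreRL n S T hST
    refine ⟨h1, ?_⟩
    rcases h2 with hset | hlt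
    · left
      have : (a + ·) '' (S : Set (Fin n → k)) = (a + ·) '' (T : Set (Fin n → k)) := by rw [hset]
      rw [this] at hAB ⊢
      exact transl_eq T.zero_mem (fun x hx y hy => T.sub_mem hx hy) hAB
    · exact Or.inr hlt
  · -- R R
    have hle : S ≤ T := hST
    refine ⟨Submodule.finrank_mono hle, ?_⟩
    by_cases hST' : S = T
    · subst hST'
      exact Or.inl (transl_eq S.zero_mem (fun x hx y hy => S.sub_mem hx hy) hAB)
    · exact Or.inr (Submodule.finrank_lt_finrank_of_lt (lt_of_le_of_ne hle hST'))

lemma gcount {n : ℕ} {g : ℕ → ℕ} (hlt : ∀ i, i < n → g i < g (i + 1)) (hn_le : g n ≤ n) :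
    ∀ i, i ≤ n → g i = i := by
  have hlow : ∀ i, i ≤ n → i ≤ g i := by
    intro i hi
    induction i with
    | zero => omega
    | succ j ihj =>
      have h1 := hlt j (by omega)
      have h2 := ihj (by omega)
      omega
  have hup : ∀ j i, i + j ≤ n → g i + j ≤ g (i + j) := by
    intro j
    induction j with
    | zero => intro i _; simp
    | succ m ihm =>
      intro i hi
      have h1 := ihm i (by omega)
      have h2 := hlt (i + m) (by omega)
      have he : i + (m + 1) = (i + m) + 1 := by omega
      rw [he]
      omega
  intro i hi
  have h1 := hup (n - i) i (by omega)
  rw [show i + (n - i) = n from by omega] at h1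
  have h2 := hlow i hi
  omega

lemma hasdiml_univ (n : ℕ) : HasDimL (Set.univ : Set (Fin n → k)) n :=
  ⟨0, ⊤, by rw [Submodule.top_coe, transl_zero], by rw [finrank_top, finrank_k_pi]⟩

/-- Main chain-processing lemma. -/
lemma chain_process {n : ℕ} (f : (Fin n → k) → (Fin n → k))
    (hinj : Function.Injective f)
    (hf : ∀ A : Set (Fin n → k), (IsLeftAff A ∨ IsRightAff A) →
      (IsLeftAff (f '' A) ∨ IsRightAff (f '' A)))
    (A_ : ℕ → Set (Fin n → k))
    (haff : ∀ i, IsLeftAff (A_ i) ∨ IsRightAff (A_ i))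
    (hdim : ∀ i, i ≤ n → (HasDimL (A_ i) i ∨ HasDimR (A_ i) i))
    (hchain : ∀ i, i < n → A_ i ⊆ A_ (i + 1) ∧ A_ i ≠ A_ (i + 1))
    (htop : A_ n = Set.univ) :
    (∀ i, i ≤ n → (HasDimL (f '' A_ i) i ∨ HasDimR (f '' A_ i) i)) ∧ f '' A_ n = Set.univ := by
  have haffIm : ∀ i, ∃ e, HasDimL (f '' A_ i) e ∨ HasDimR (f '' A_ i) e := by
    intro i
    rcases hf (A_ i) (haff i) with ⟨v, S, h⟩ | ⟨v, S, h⟩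
    · exact ⟨finrank k S, Or.inl ⟨v, S, h, rfl⟩⟩
    · exact ⟨finrank kᵐᵒᵖ S, Or.inr ⟨v, S, h, rfl⟩⟩
  set g : ℕ → ℕ := fun i => (haffIm i).choose with hg
  have hgspec : ∀ i, HasDimL (f '' A_ i) (g i) ∨ HasDimR (f '' A_ i) (g i) :=
    fun i => (haffIm i).choose_spec
  have hglt : ∀ i, i < n → g i < g (i + 1) := by
    intro i hi
    obtain ⟨hsub, hne⟩ := hchain i hi
    have himsub : f '' A_ i ⊆ f '' A_ (i + 1) := Set.image_mono hsub
    have himne : f '' A_ i ≠ f '' A_ (i + 1) :=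
      fun h => hne (Set.image_injective.mpr hinj h)
    obtain ⟨h1, h2⟩ := affd_mono (hgspec i) (hgspec (i + 1)) himsub
    rcases h2 with h | h
    · exact absurd h himne
    · exact h
  have hgn_le : g n ≤ n ∧ (f '' A_ n = Set.univ ∨ g n < n) := by
    have := affd_mono (hgspec n) (Or.inl (hasdiml_univ n)) (by rw [htop]; exact Set.image_subset_iff.mpr fun x _ => trivial)
    exact this
  have hgeq : ∀ i, i ≤ n → g i = i := gcount hglt hgn_le.1
  have hfn : f '' A_ n = Set.univ := by
    rcases hgn_le.2 with h | h
    · exact h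
    · rw [hgeq n le_rfl] at h; omega
  refine ⟨fun i hi => ?_, hfn⟩
  have := hgspec i
  rwa [hgeq i hi] at this

lemma transl_univ {n : ℕ} (v : Fin n → k) : (v + ·) '' (Set.univ : Set (Fin n → k)) = Set.univ := by
  ext y
  simp only [Set.mem_univ, iff_true]
  exact ⟨y - v, trivial, by simp⟩


end AuxOp

open Module in
/-- Part (1) of the main theorem: an injective map taking every left or right affine
subspace to a left or right affine subspace is bijective and preserves dimensions. -/
theorem stmt_4 [DivisionRing k] {n : ℕ} (f : (Fin n → k) → (Fin n → k))
    (hinj : Function.Injective f)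
    (hf : ∀ A : Set (Fin n → k), (IsLeftAff A ∨ IsRightAff A) →
      (IsLeftAff (f '' A) ∨ IsRightAff (f '' A))) :
    Function.Bijective f ∧
      ∀ (A : Set (Fin n → k)) (d : ℕ),
        (HasDimL A d ∨ HasDimR A d) → (HasDimL (f '' A) d ∨ HasDimR (f '' A) d) := by
  have buildL : ∀ (v : Fin n → k) (S : Submodule k (Fin n → k)),
      ((HasDimL (f '' ((v + ·) '' (S : Set (Fin n → k)))) (finrank k S) ∨
        HasDimR (f '' ((v + ·) '' (S : Set (Fin n → k)))) (finrank k S))) ∧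
        f '' Set.univ = Set.univ := by
    intro v S
    obtain ⟨c, hcd, hcrk, hclt⟩ := aux_chain S
    set A_ : ℕ → Set (Fin n → k) := fun i => (v + ·) '' ((c i : Set (Fin n → k))) with hA_
    have hrkV : finrank k (Fin n → k) = n := finrank_k_pi n
    have haff : ∀ i, IsLeftAff (A_ i) ∨ IsRightAff (A_ i) := fun i => Or.inl ⟨v, c i, rfl⟩
    have hchain : ∀ i, i < n → A_ i ⊆ A_ (i + 1) ∧ A_ i ≠ A_ (i + 1) := by
      intro i hi
      have hlt := hclt i (by rw [hrkV]; omega)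
      constructor
      · exact Set.image_mono (SetLike.coe_subset_coe.mpr hlt.le)
      · intro h
        have h2 : ((c i : Set (Fin n → k))) = ((c (i + 1) : Set (Fin n → k))) :=
          Set.image_injective.mpr (add_right_injective v) h
        exact hlt.ne (SetLike.coe_injective h2)
    have htop : A_ n = Set.univ := by
      have hcn : c n = ⊤ :=
        Submodule.eq_top_of_finrank_eq (by rw [hcrk n (by rw [hrkV]), hrkV])
      show (v + ·) '' ((c n : Set (Fin n → k))) = Set.univ
      rw [hcn, Submodule.top_coe, transl_univ]
    obtain ⟨hall, hfn⟩ := chain_process f hinj hf A_ haff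
      (fun i hi => Or.inl ⟨v, c i, rfl, hcrk i (by rw [hrkV]; exact hi)⟩) hchain htop
    constructor
    · have hd : finrank k S ≤ n := by
        have := Submodule.finrank_le S; rwa [hrkV] at this
      have hthis := hall (finrank k S) hd
      have e : A_ (finrank k S) = (v + ·) '' (S : Set (Fin n → k)) := by
        show (v + ·) '' ((c (finrank k S) : Set (Fin n → k))) = _
        rw [hcd]
      rwa [e] at hthis
    · rwa [htop] at hfn
  have buildR : ∀ (v : Fin n → k) (S : Submodule kᵐᵒᵖ (Fin n → k)),
      ((HasDimL (f '' ((v + ·) '' (S : Set (Fin n → k)))) (finrank kᵐᵒᵖ S) ∨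
        HasDimR (f '' ((v + ·) '' (S : Set (Fin n → k)))) (finrank kᵐᵒᵖ S))) := by
    intro v S
    obtain ⟨c, hcd, hcrk, hclt⟩ := aux_chain S
    set A_ : ℕ → Set (Fin n → k) := fun i => (v + ·) '' ((c i : Set (Fin n → k))) with hA_
    have hrkV : finrank kᵐᵒᵖ (Fin n → k) = n := finrank_op_pi n
    have haff : ∀ i, IsLeftAff (A_ i) ∨ IsRightAff (A_ i) := fun i => Or.inr ⟨v, c i, rfl⟩
    have hchain : ∀ i, i < n → A_ i ⊆ A_ (i + 1) ∧ A_ i ≠ A_ (i + 1) := by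
      intro i hi
      have hlt := hclt i (by rw [hrkV]; omega)
      constructor
      · exact Set.image_mono (SetLike.coe_subset_coe.mpr hlt.le)
      · intro h
        have h2 : ((c i : Set (Fin n → k))) = ((c (i + 1) : Set (Fin n → k))) :=
          Set.image_injective.mpr (add_right_injective v) h
        exact hlt.ne (SetLike.coe_injective h2)
    have htop : A_ n = Set.univ := by
      have hcn : c n = ⊤ :=
        Submodule.eq_top_of_finrank_eq (by rw [hcrk n (by rw [hrkV]), hrkV])
      show (v + ·) '' ((c n : Set (Fin n → k))) = Set.univ
      rw [hcn, Submodule.top_coe, transl_univ]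
    obtain ⟨hall, hfn⟩ := chain_process f hinj hf A_ haff
      (fun i hi => Or.inr ⟨v, c i, rfl, hcrk i (by rw [hrkV]; exact hi)⟩) hchain htop
    have hd : finrank kᵐᵒᵖ S ≤ n := by
      have := Submodule.finrank_le S; rwa [hrkV] at this
    have hthis := hall (finrank kᵐᵒᵖ S) hd
    have e : A_ (finrank kᵐᵒᵖ S) = (v + ·) '' (S : Set (Fin n → k)) := by
      show (v + ·) '' ((c (finrank kᵐᵒᵖ S) : Set (Fin n → k))) = _
      rw [hcd]
    rwa [e] at hthis
  have hsurjuniv : f '' Set.univ = Set.univ := (buildL 0 ⊥).2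
  have hsurj : Function.Surjective f := by
    intro y
    have hy : y ∈ f '' Set.univ := by rw [hsurjuniv]; trivial
    obtain ⟨x, _, hx⟩ := hy
    exact ⟨x, hx⟩
  refine ⟨⟨hinj, hsurj⟩, ?_⟩
  intro A d hAd
  rcases hAd with ⟨v, S, hAeq, hdS⟩ | ⟨v, S, hAeq, hdS⟩
  · subst hAeq; subst hdS; exact (buildL v S).1
  · subst hAeq; subst hdS; exact buildR v S
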